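/- arXiv:math/0608128 — 2 statements merged into one kernel-verified Lean document; each statement's English description precedes it below -/
import Mathlib

section
/- Let χ ∈ ℝ with χ ≥ 1, and for t ≥ 0 define F_t : ℂ → ℂ by F_t(z) = 1 − e^{−t} + e^{−t}·(z + z̄)/2 + e^{−χt}·(z − z̄)/2. Then for each t ≥ 0: (i) F_t maps the closed unit disk {z : |z| ≤ 1} into itself; (ii) F_t(1) = 1; (iii) F_t restricted to the open unit disk Δ is nonexpansive with respect to the Poincaré hyperbolic metric, i.e., ρ(F_t(z), F_t(w)) ≤ ρ(z, w) for all z, w ∈ Δ; and (iv) for every z with |z| ≤ 1, lim_{t→∞} F_t(z) = 1. -/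
open Filter Topology

/-- The inverse hyperbolic tangent, `artanh x = ½ log((1+x)/(1-x))`. -/
noncomputable def artanh (x : ℝ) : ℝ := (1 / 2) * Real.log ((1 + x) / (1 - x))

/-- The Poincaré hyperbolic metric on the open unit disk:
`ρ(z,w) = artanh |(z - w)/(1 - w̄ z)|`. -/
noncomputable def poincareDist (z w : ℂ) : ℝ :=
  artanh (‖(z - w) / (1 - starRingEnd ℂ w * z)‖)

private lemma artanh_mono {s r : ℝ} (hs : 0 ≤ s) (hsr : s ≤ r) (hr : r < 1) :
    artanh s ≤ artanh r := by
  unfold artanh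
  have h1 : (0:ℝ) < 1 - r := by linarith
  have h2 : (0:ℝ) < 1 - s := by linarith
  have hnum : (1+s)/(1-s) ≤ (1+r)/(1-r) := by
    rw [div_le_div_iff₀ h2 h1]; nlinarith
  have hpos : (0:ℝ) < (1+s)/(1-s) := div_pos (by linarith) h2
  have := Real.log_le_log hpos hnum
  linarith

private lemma classic_id (z w : ℂ) :
    Complex.normSq (1 - starRingEnd ℂ w * z)
      = Complex.normSq (z - w) + (1 - Complex.normSq z) * (1 - Complex.normSq w) := by
  simp only [Complex.normSq_apply, Complex.sub_re, Complex.sub_im, Complex.mul_re,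
    Complex.mul_im, Complex.one_re, Complex.one_im, Complex.conj_re, Complex.conj_im]
  ring

set_option maxHeartbeats 1000000 in
private lemma master_ineq (a b x y u v : ℝ) (hb : 0 < b) (hba : b ≤ a) (ha : a ≤ 1)
    (hz : x^2 + y^2 ≤ 1) (hw : u^2 + v^2 ≤ 1) :
    (a^2*(x-u)^2 + b^2*(y-v)^2) * ((1-(u*x+v*y))^2 + (u*y-v*x)^2)
      ≤ ((x-u)^2 + (y-v)^2) *
        ((1 - ((1-a+a*u)*(1-a+a*x) + (b*v)*(b*y)))^2
          + ((1-a+a*u)*(b*y) - (b*v)*(1-a+a*x))^2) := by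
  have ha0 : 0 < a := lt_of_lt_of_le hb hba
  have hd : 0 ≤ a^2 - b^2 := by nlinarith
  have hz' : 0 ≤ 1 - (x^2+y^2) := by linarith
  have hw' : 0 ≤ 1 - (u^2+v^2) := by linarith
  have h1a : 0 ≤ 1 - a := by linarith
  have hKpos : (0:ℝ) ≤ (x-u)^2 + (y-v)^2 := by positivity
  -- Step 1
  have q1 : 0 ≤ (x-u)^2*v^2*(1-(x^2+y^2)) :=
    mul_nonneg (mul_nonneg (sq_nonneg _) (sq_nonneg _)) hz'
  have q2 : 0 ≤ (x-u)^2*y^2*(1-(u^2+v^2)) :=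
    mul_nonneg (mul_nonneg (sq_nonneg _) (sq_nonneg _)) hw'
  have q3 : 0 ≤ (y-v)^2*(1-(x^2+y^2))*(1-(u^2+v^2)) :=
    mul_nonneg (mul_nonneg (sq_nonneg _) hz') hw'
  have q4 : 0 ≤ (y-v)^2*(1-(x^2+y^2))*v^2 :=
    mul_nonneg (mul_nonneg (sq_nonneg _) hz') (sq_nonneg _)
  have q5 : 0 ≤ (y-v)^2*(1-(u^2+v^2))*y^2 :=
    mul_nonneg (mul_nonneg (sq_nonneg _) hw') (sq_nonneg _)
  have hT1 : 0 ≤ a^2*(a^2-b^2) * ((x-u)^2*v^2*(1-(x^2+y^2)) + (x-u)^2*y^2*(1-(u^2+v^2))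
      + (y-v)^2*(1-(x^2+y^2))*(1-(u^2+v^2)) + (y-v)^2*(1-(x^2+y^2))*v^2
      + (y-v)^2*(1-(u^2+v^2))*y^2) :=
    mul_nonneg (mul_nonneg (sq_nonneg a) hd) (by linarith)
  have hT2 : 0 ≤ (a^2-b^2)^2 * (y^2*v^2*((x-u)^2 + (y-v)^2)) :=
    mul_nonneg (sq_nonneg _) (by positivity)
  have idA : ((x-u)^2 + (y-v)^2) * ((a^2 - a^2*(u*x) - b^2*(v*y))^2 + a^2*b^2*(u*y-v*x)^2)
      - a^2*((a^2*(x-u)^2 + b^2*(y-v)^2) * ((1-(u*x+v*y))^2 + (u*y-v*x)^2))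
      = a^2*(a^2-b^2) * ((x-u)^2*v^2*(1-(x^2+y^2)) + (x-u)^2*y^2*(1-(u^2+v^2))
          + (y-v)^2*(1-(x^2+y^2))*(1-(u^2+v^2)) + (y-v)^2*(1-(x^2+y^2))*v^2
          + (y-v)^2*(1-(u^2+v^2))*y^2)
        + (a^2-b^2)^2 * (y^2*v^2*((x-u)^2 + (y-v)^2)) := by ring
  have hstep1 : a^2*((a^2*(x-u)^2 + b^2*(y-v)^2) * ((1-(u*x+v*y))^2 + (u*y-v*x)^2))
      ≤ ((x-u)^2 + (y-v)^2) * ((a^2 - a^2*(u*x) - b^2*(v*y))^2 + a^2*b^2*(u*y-v*x)^2) := by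
    exact sub_nonneg.mp (by rw [idA]; exact add_nonneg hT1 hT2)
  -- Step 2
  have hQ1 : 0 ≤ a^2 - a^2*u^2 - b^2*v^2 := by
    nlinarith [mul_nonneg hd (sq_nonneg v), mul_nonneg (sq_nonneg a) hw']
  have hQ2 : 0 ≤ a^2 - a^2*x^2 - b^2*y^2 := by
    nlinarith [mul_nonneg hd (sq_nonneg y), mul_nonneg (sq_nonneg a) hz']
  have idB : a^2 * ((1 - ((1-a+a*u)*(1-a+a*x) + (b*v)*(b*y)))^2
        + ((1-a+a*u)*(b*y) - (b*v)*(1-a+a*x))^2)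
      - ((a^2 - a^2*(u*x) - b^2*(v*y))^2 + a^2*b^2*(u*y-v*x)^2)
      = (1-a) * ((a^2*(1-x)^2 + b^2*y^2)*(a^2 - a^2*u^2 - b^2*v^2)
          + (a^2*(1-u)^2 + b^2*v^2)*(a^2 - a^2*x^2 - b^2*y^2))
        + (1-a)^2 * ((a^2*(1-x)^2 + b^2*y^2)*(a^2*(1-u)^2 + b^2*v^2)) := by ring
  have r1 : 0 ≤ (a^2*(1-x)^2 + b^2*y^2)*(a^2 - a^2*u^2 - b^2*v^2) :=
    mul_nonneg (by positivity) hQ1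
  have r2 : 0 ≤ (a^2*(1-u)^2 + b^2*v^2)*(a^2 - a^2*x^2 - b^2*y^2) :=
    mul_nonneg (by positivity) hQ2
  have hRB : 0 ≤ (1-a) * ((a^2*(1-x)^2 + b^2*y^2)*(a^2 - a^2*u^2 - b^2*v^2)
        + (a^2*(1-u)^2 + b^2*v^2)*(a^2 - a^2*x^2 - b^2*y^2))
      + (1-a)^2 * ((a^2*(1-x)^2 + b^2*y^2)*(a^2*(1-u)^2 + b^2*v^2)) := by
    have := mul_nonneg h1a (add_nonneg r1 r2)
    have h2 : 0 ≤ (1-a)^2 * ((a^2*(1-x)^2 + b^2*y^2)*(a^2*(1-u)^2 + b^2*v^2)) := by positivity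
    linarith
  have hstep2 : ((a^2 - a^2*(u*x) - b^2*(v*y))^2 + a^2*b^2*(u*y-v*x)^2)
      ≤ a^2 * ((1 - ((1-a+a*u)*(1-a+a*x) + (b*v)*(b*y)))^2
        + ((1-a+a*u)*(b*y) - (b*v)*(1-a+a*x))^2) := by
    exact sub_nonneg.mp (by rw [idB]; exact hRB)
  have hstep2' : ((x-u)^2 + (y-v)^2) * ((a^2 - a^2*(u*x) - b^2*(v*y))^2 + a^2*b^2*(u*y-v*x)^2)
      ≤ a^2 * (((x-u)^2 + (y-v)^2) * ((1 - ((1-a+a*u)*(1-a+a*x) + (b*v)*(b*y)))^2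
        + ((1-a+a*u)*(b*y) - (b*v)*(1-a+a*x))^2)) :=
    (mul_le_mul_of_nonneg_left hstep2 hKpos).trans_eq (mul_left_comm _ _ _)
  have hfin := le_trans hstep1 hstep2'
  exact le_of_mul_le_mul_left hfin (by positivity)

set_option maxHeartbeats 1600000 in
theorem stmt12 (χ : ℝ) (hχ : (1 : ℝ) ≤ χ)
    (F : ℝ → ℂ → ℂ)
    (hF : ∀ t ≥ (0 : ℝ), ∀ z : ℂ,
      F t z = 1 - (Real.exp (-t) : ℝ) + ((Real.exp (-t) : ℝ) : ℂ) * ((z + starRingEnd ℂ z) / 2)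
        + ((Real.exp (-(χ * t)) : ℝ) : ℂ) * ((z - starRingEnd ℂ z) / 2)) :
    (∀ t ≥ (0 : ℝ),
      (∀ z : ℂ, ‖z‖ ≤ 1 → ‖F t z‖ ≤ 1) ∧
      F t 1 = 1 ∧
      (∀ z w : ℂ, ‖z‖ < 1 → ‖w‖ < 1 →
        poincareDist (F t z) (F t w) ≤ poincareDist z w)) ∧
    (∀ z : ℂ, ‖z‖ ≤ 1 → Tendsto (fun t : ℝ => F t z) atTop (𝓝 1)) := by
  constructor
  · intro t ht
    have ha0 : 0 < Real.exp (-t) := Real.exp_pos _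
    have hb0 : 0 < Real.exp (-(χ*t)) := Real.exp_pos _
    set a := Real.exp (-t) with hadef
    set b := Real.exp (-(χ*t)) with hbdef
    have hba : b ≤ a := Real.exp_le_exp.2 (by nlinarith)
    have ha1 : a ≤ 1 := by
      rw [hadef, show (1:ℝ) = Real.exp 0 from (Real.exp_zero).symm]
      exact Real.exp_le_exp.2 (by linarith)
    have hFz : ∀ z : ℂ, F t z = ((1 - a + a * z.re : ℝ) : ℂ) + ((b * z.im : ℝ) : ℂ) * Complex.I := by
      intro z
      rw [hF t ht z, ← hadef, ← hbdef, Complex.add_conj, Complex.sub_conj]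
      simp only [Complex.ofReal_add, Complex.ofReal_sub, Complex.ofReal_mul,
        Complex.ofReal_one, Complex.ofReal_ofNat]
      ring
    have hre : ∀ z : ℂ, (F t z).re = 1 - a + a * z.re := by
      intro z; rw [hFz z]; simp
    have him : ∀ z : ℂ, (F t z).im = b * z.im := by
      intro z; rw [hFz z]; simp
    have hnsq : ∀ z : ℂ, Complex.normSq (F t z) = (1 - a + a*z.re)^2 + (b*z.im)^2 := by
      intro z; rw [Complex.normSq_apply, hre z, him z]; ring
    have habd : 0 ≤ a^2 - b^2 := by nlinarith
    refine ⟨?_, ?_, ?_⟩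
    · intro z hz
      have hzsq : z.re^2 + z.im^2 ≤ 1 := by
        have h1 := Complex.sq_norm z
        rw [Complex.normSq_apply] at h1
        nlinarith [norm_nonneg z]
      have hx1 : z.re ≤ 1 := by nlinarith [sq_nonneg (z.re - 1), sq_nonneg z.im]
      have hN : Complex.normSq (F t z) ≤ 1 := by
        rw [hnsq z]
        nlinarith [mul_nonneg (mul_nonneg ha0.le (by linarith : (0:ℝ) ≤ 1 - a))
            (by linarith : (0:ℝ) ≤ 1 - z.re),
          mul_nonneg habd (sq_nonneg z.im),
          mul_nonneg (sq_nonneg a) (by linarith : (0:ℝ) ≤ 1 - (z.re^2 + z.im^2))]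
      have h2 := Complex.sq_norm (F t z)
      nlinarith [norm_nonneg (F t z), sq_nonneg (‖F t z‖ - 1)]
    · rw [hF t ht 1]
      simp only [map_one]
      norm_num
    · intro z w hz hw
      have hzsq : z.re^2 + z.im^2 < 1 := by
        have h1 := Complex.sq_norm z
        rw [Complex.normSq_apply] at h1
        nlinarith [norm_nonneg z]
      have hwsq : w.re^2 + w.im^2 < 1 := by
        have h1 := Complex.sq_norm w
        rw [Complex.normSq_apply] at h1
        nlinarith [norm_nonneg w]
      have hx1 : z.re ≤ 1 := by nlinarith [sq_nonneg (z.re - 1), sq_nonneg z.im]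
      have hu1 : w.re ≤ 1 := by nlinarith [sq_nonneg (w.re - 1), sq_nonneg w.im]
      have hnz : Complex.normSq z < 1 := by
        rw [Complex.normSq_apply]; nlinarith
      have hnw : Complex.normSq w < 1 := by
        rw [Complex.normSq_apply]; nlinarith
      have hnFz : Complex.normSq (F t z) < 1 := by
        rw [hnsq z]
        nlinarith [mul_nonneg (mul_nonneg ha0.le (by linarith : (0:ℝ) ≤ 1 - a))
            (by linarith : (0:ℝ) ≤ 1 - z.re),
          mul_nonneg habd (sq_nonneg z.im),
          mul_pos (mul_pos ha0 ha0) (by linarith : (0:ℝ) < 1 - (z.re^2 + z.im^2))]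
      have hnFw : Complex.normSq (F t w) < 1 := by
        rw [hnsq w]
        nlinarith [mul_nonneg (mul_nonneg ha0.le (by linarith : (0:ℝ) ≤ 1 - a))
            (by linarith : (0:ℝ) ≤ 1 - w.re),
          mul_nonneg habd (sq_nonneg w.im),
          mul_pos (mul_pos ha0 ha0) (by linarith : (0:ℝ) < 1 - (w.re^2 + w.im^2))]
      have hdzpos : 0 < Complex.normSq (1 - starRingEnd ℂ w * z) := by
        rw [classic_id z w]
        nlinarith [Complex.normSq_nonneg (z - w),
          mul_pos (sub_pos.2 hnz) (sub_pos.2 hnw)]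
      have hdFpos : 0 < Complex.normSq (1 - starRingEnd ℂ (F t w) * F t z) := by
        rw [classic_id (F t z) (F t w)]
        nlinarith [Complex.normSq_nonneg (F t z - F t w),
          mul_pos (sub_pos.2 hnFz) (sub_pos.2 hnFw)]
      have habsdz : 0 < ‖1 - starRingEnd ℂ w * z‖ :=
        norm_pos_iff.mpr (Complex.normSq_pos.mp hdzpos)
      have habsdF : 0 < ‖1 - starRingEnd ℂ (F t w) * F t z‖ :=
        norm_pos_iff.mpr (Complex.normSq_pos.mp hdFpos)
      have ez : Complex.normSq (z - w) = (z.re - w.re)^2 + (z.im - w.im)^2 := by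
        rw [Complex.normSq_apply, Complex.sub_re, Complex.sub_im]; ring
      have eF : Complex.normSq (F t z - F t w)
          = (a*z.re - a*w.re)^2 + (b*z.im - b*w.im)^2 := by
        rw [Complex.normSq_apply, Complex.sub_re, Complex.sub_im, hre z, hre w,
          him z, him w]
        ring
      have edz : Complex.normSq (1 - starRingEnd ℂ w * z)
          = (1 - (w.re*z.re + w.im*z.im))^2 + (w.re*z.im - w.im*z.re)^2 := by
        rw [Complex.normSq_apply, Complex.sub_re, Complex.sub_im, Complex.one_re,
          Complex.one_im, Complex.mul_re, Complex.mul_im, Complex.conj_re, Complex.conj_im]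
        ring
      have edF : Complex.normSq (1 - starRingEnd ℂ (F t w) * F t z)
          = (1 - ((1-a+a*w.re)*(1-a+a*z.re) + (b*w.im)*(b*z.im)))^2
            + ((1-a+a*w.re)*(b*z.im) - (b*w.im)*(1-a+a*z.re))^2 := by
        rw [Complex.normSq_apply, Complex.sub_re, Complex.sub_im, Complex.one_re,
          Complex.one_im, Complex.mul_re, Complex.mul_im, Complex.conj_re, Complex.conj_im,
          hre z, hre w, him z, him w]
        ring
      unfold poincareDist
      refine artanh_mono (norm_nonneg _) ?_ ?_
      · rw [norm_div, norm_div, div_le_div_iff₀ habsdF habsdz]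
        have key := master_ineq a b z.re z.im w.re w.im hb0 hba ha1 hzsq.le hwsq.le
        have hsq : (‖F t z - F t w‖ * ‖1 - starRingEnd ℂ w * z‖)^2
            ≤ (‖z - w‖ * ‖1 - starRingEnd ℂ (F t w) * F t z‖)^2 := by
          rw [mul_pow, mul_pow, Complex.sq_norm, Complex.sq_norm, Complex.sq_norm,
            Complex.sq_norm, eF, edz, ez, edF]
          linarith [key]
        have hs := Real.sqrt_le_sqrt hsq
        rwa [Real.sqrt_sq (by positivity), Real.sqrt_sq (by positivity)] at hs
      · rw [norm_div, div_lt_one habsdz]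
        have hsq2 : (‖z - w‖)^2 < (‖1 - starRingEnd ℂ w * z‖)^2 := by
          rw [Complex.sq_norm, Complex.sq_norm, classic_id z w]
          nlinarith [mul_pos (sub_pos.2 hnz) (sub_pos.2 hnw)]
        have hs := Real.sqrt_lt_sqrt (sq_nonneg _) hsq2
        rwa [Real.sqrt_sq (norm_nonneg _), Real.sqrt_sq (norm_nonneg _)] at hs
  · intro z _
    have hP : Tendsto (fun t : ℝ => Real.exp (-t)) atTop (𝓝 0) :=
      Real.tendsto_exp_atBot.comp tendsto_neg_atTop_atBot
    have hQ : Tendsto (fun t : ℝ => Real.exp (-(χ*t))) atTop (𝓝 0) :=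
      Real.tendsto_exp_atBot.comp
        (tendsto_neg_atTop_atBot.comp
          (Tendsto.const_mul_atTop (by linarith : (0:ℝ) < χ) tendsto_id))
    have hPc : Tendsto (fun t : ℝ => ((Real.exp (-t) : ℝ) : ℂ)) atTop (𝓝 0) := by
      have h := (Complex.continuous_ofReal.tendsto 0).comp hP
      simpa only [Function.comp_def, Complex.ofReal_zero] using h
    have hQc : Tendsto (fun t : ℝ => ((Real.exp (-(χ*t)) : ℝ) : ℂ)) atTop (𝓝 0) := by
      have h := (Complex.continuous_ofReal.tendsto 0).comp hQ
      simpa only [Function.comp_def, Complex.ofReal_zero] using h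
    have hmain : Tendsto (fun t : ℝ => 1 - ((Real.exp (-t) : ℝ) : ℂ)
        + ((Real.exp (-t) : ℝ) : ℂ) * ((z + starRingEnd ℂ z) / 2)
        + ((Real.exp (-(χ * t)) : ℝ) : ℂ) * ((z - starRingEnd ℂ z) / 2)) atTop
        (𝓝 (1 - 0 + 0 * ((z + starRingEnd ℂ z) / 2) + 0 * ((z - starRingEnd ℂ z) / 2))) :=
      ((tendsto_const_nhds.sub hPc).add (hPc.mul tendsto_const_nhds)).add
        (hQc.mul tendsto_const_nhds)
    have hmain' : Tendsto (fun t : ℝ => 1 - ((Real.exp (-t) : ℝ) : ℂ)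
        + ((Real.exp (-t) : ℝ) : ℂ) * ((z + starRingEnd ℂ z) / 2)
        + ((Real.exp (-(χ * t)) : ℝ) : ℂ) * ((z - starRingEnd ℂ z) / 2)) atTop (𝓝 1) := by
      have e : (1 : ℂ) - 0 + 0 * ((z + starRingEnd ℂ z) / 2)
          + 0 * ((z - starRingEnd ℂ z) / 2) = 1 := by ring
      rw [e] at hmain
      exact hmain
    exact hmain'.congr' (by
      filter_upwards [eventually_ge_atTop (0:ℝ)] with t ht
      exact (hF t ht z).symm)
end

section
/- Let H₁ be a complex Hilbert space, H = ℂ × H₁ with the product Hilbert space structure, and B = {(z₁, z₂) ∈ H : |z₁|² + ‖z₂‖² < 1}. For t ≥ 0 define F_t(z₁, z₂) = ( z₁/(z₁ + e^t(1 − z₁)), e^{t/2} z₂/(z₁ + e^t(1 − z₁)) ), and let τ = (1, 0) ∈ H. Then for every t ≥ 0 and every (z₁, z₂) ∈ B, the denominator z₁ + e^t(1 − z₁) is nonzero, F_t(z₁, z₂) ∈ B, and d_τ(F_t(z₁, z₂)) ≤ e^{t} · d_τ(z₁, z₂). -/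
/-- The non-Euclidean "distance" `d_τ(z₁,z₂) = |1 - ⟨(z₁,z₂),τ⟩|²/(1 - ‖(z₁,z₂)‖²)` to the
boundary point `τ = (1,0)` of the unit ball of the product Hilbert space `ℂ × H₁`:
here `⟨(z₁,z₂),(1,0)⟩ = z₁` and `‖(z₁,z₂)‖² = |z₁|² + ‖z₂‖²`. -/
noncomputable def dtauProd {H₁ : Type*} [NormedAddCommGroup H₁] [InnerProductSpace ℂ H₁]
    (z₁ : ℂ) (z₂ : H₁) : ℝ :=
  ‖1 - z₁‖ ^ 2 / (1 - ‖z₁‖ ^ 2 - ‖z₂‖ ^ 2)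

theorem stmt13 {H₁ : Type*} [NormedAddCommGroup H₁] [InnerProductSpace ℂ H₁] [CompleteSpace H₁]
    (t : ℝ) (ht : 0 ≤ t) (z₁ : ℂ) (z₂ : H₁)
    (hz : ‖z₁‖ ^ 2 + ‖z₂‖ ^ 2 < 1) :
    z₁ + ((Real.exp t : ℝ) : ℂ) * (1 - z₁) ≠ 0 ∧
    ‖z₁ / (z₁ + ((Real.exp t : ℝ) : ℂ) * (1 - z₁))‖ ^ 2 +
      ‖((((Real.exp (t / 2) : ℝ) : ℂ) / (z₁ + ((Real.exp t : ℝ) : ℂ) * (1 - z₁))) • z₂)‖ ^ 2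
      < 1 ∧
    dtauProd (z₁ / (z₁ + ((Real.exp t : ℝ) : ℂ) * (1 - z₁)))
        ((((Real.exp (t / 2) : ℝ) : ℂ) / (z₁ + ((Real.exp t : ℝ) : ℂ) * (1 - z₁))) • z₂) ≤
      Real.exp t * dtauProd z₁ z₂ := by
  set E := Real.exp t with hEdef
  have hE1 : 1 ≤ E := Real.one_le_exp ht
  have hE0 : (0:ℝ) < E := lt_of_lt_of_le one_pos hE1
  set S : ℝ := 1 - ‖z₁‖ ^ 2 - ‖z₂‖ ^ 2 with hSdef
  have hS : 0 < S := by simp only [hSdef]; linarith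
  set w : ℂ := z₁ + (E:ℂ) * (1 - z₁) with hwdef
  have key : ‖w‖ ^ 2 =
      ‖z₁‖ ^ 2 + E * ‖z₂‖ ^ 2 + E * S + E * (E - 1) * ‖1 - z₁‖ ^ 2 := by
    simp only [hwdef, hSdef, Complex.sq_norm, Complex.normSq_apply, Complex.add_re,
      Complex.add_im, Complex.mul_re, Complex.mul_im, Complex.sub_re, Complex.sub_im,
      Complex.one_re, Complex.one_im, Complex.ofReal_re, Complex.ofReal_im]
    ring
  have hc : 0 ≤ ‖1 - z₁‖ ^ 2 := sq_nonneg _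
  have hNpos : 0 < ‖w‖ ^ 2 - ‖z₁‖ ^ 2 - E * ‖z₂‖ ^ 2 := by
    rw [key]
    nlinarith [mul_pos hE0 hS, mul_nonneg (mul_nonneg hE0.le (sub_nonneg.2 hE1)) hc]
  have hwpos : 0 < ‖w‖ ^ 2 := by
    nlinarith [sq_nonneg (‖z₁‖), mul_nonneg hE0.le (sq_nonneg ‖z₂‖)]
  have hw : w ≠ 0 := by
    intro h; rw [h] at hwpos; simp at hwpos
  refine ⟨hw, ?_, ?_⟩
  · have h1 : ‖z₁ / w‖ ^ 2 = ‖z₁‖ ^ 2 / ‖w‖ ^ 2 := by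
      rw [norm_div, div_pow]
    have h2 : ‖(((Real.exp (t / 2) : ℝ) : ℂ) / w) • z₂‖ ^ 2 = E * ‖z₂‖ ^ 2 / ‖w‖ ^ 2 := by
      rw [norm_smul, mul_pow]
      have : ‖(((Real.exp (t / 2) : ℝ) : ℂ) / w)‖ ^ 2 = E / ‖w‖ ^ 2 := by
        rw [norm_div, div_pow, Complex.norm_real, Real.norm_eq_abs,
          abs_of_pos (Real.exp_pos _), sq, ← Real.exp_add]
        norm_num [hEdef]
      rw [this]; ring
    rw [h1, h2, ← add_div, div_lt_one hwpos]
    linarith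
  · have h3 : (1:ℂ) - z₁ / w = (E:ℂ) * (1 - z₁) / w := by
      field_simp
      rw [hwdef]; ring
    have h4 : ‖(1:ℂ) - z₁ / w‖ ^ 2 =
        E ^ 2 * ‖1 - z₁‖ ^ 2 / ‖w‖ ^ 2 := by
      rw [h3, norm_div, norm_mul, Complex.norm_real, Real.norm_eq_abs, abs_of_pos hE0, div_pow, mul_pow]
    have h1 : ‖z₁ / w‖ ^ 2 = ‖z₁‖ ^ 2 / ‖w‖ ^ 2 := by
      rw [norm_div, div_pow]
    have h2 : ‖(((Real.exp (t / 2) : ℝ) : ℂ) / w) • z₂‖ ^ 2 = E * ‖z₂‖ ^ 2 / ‖w‖ ^ 2 := by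
      rw [norm_smul, mul_pow]
      have : ‖(((Real.exp (t / 2) : ℝ) : ℂ) / w)‖ ^ 2 = E / ‖w‖ ^ 2 := by
        rw [norm_div, div_pow, Complex.norm_real, Real.norm_eq_abs,
          abs_of_pos (Real.exp_pos _), sq, ← Real.exp_add]
        norm_num [hEdef]
      rw [this]; ring
    unfold dtauProd
    rw [h4, h1, h2]
    have hden : 1 - ‖z₁‖ ^ 2 / ‖w‖ ^ 2 - E * ‖z₂‖ ^ 2 / ‖w‖ ^ 2 =
        (‖w‖ ^ 2 - ‖z₁‖ ^ 2 - E * ‖z₂‖ ^ 2) / ‖w‖ ^ 2 := by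
      field_simp
    have hquot : E ^ 2 * ‖1 - z₁‖ ^ 2 / ‖w‖ ^ 2 /
        ((‖w‖ ^ 2 - ‖z₁‖ ^ 2 - E * ‖z₂‖ ^ 2) / ‖w‖ ^ 2) =
        E ^ 2 * ‖1 - z₁‖ ^ 2 /
        (‖w‖ ^ 2 - ‖z₁‖ ^ 2 - E * ‖z₂‖ ^ 2) := by
      rw [div_div_div_cancel_right₀]
      exact hwpos.ne'
    rw [hden, hquot]
    have hS' : 1 - ‖z₁‖ ^ 2 - ‖z₂‖ ^ 2 = S := rfl
    rw [hS', mul_div_assoc', div_le_div_iff₀ hNpos hS]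
    rw [key]
    nlinarith [mul_nonneg (mul_nonneg (mul_nonneg (mul_nonneg hE0.le hE0.le)
      (sub_nonneg.2 hE1)) hc) hc]
end
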